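/- For fixed costs c_1,...,c_n with c_max = max_i c_i and n ≥ 2, there exists B_0 such that for all B > B_0, Σ_{i=1}^n (1 - (B - c_max)/(B - c_i)) < 1; consequently, since F(B,x) = Σ_i max(1 - x/(B - c_i), 0) is strictly decreasing in x on the region where it is positive, the solution x*(B) of F(B, x*(B)) = 1 satisfies x*(B) < B - c_max. -/

import Mathlib

open Finset

theorem tullock_all_active_for_large_budget
    (n : ℕ) (hn : 2 ≤ n)
    (c : Fin n → ℝ) (hc : ∀ i, 0 < c i)
    (cmax : ℝ) (hcmax : IsGreatest (Set.range c) cmax)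
    (F : ℝ → ℝ → ℝ)
    (hF : ∀ B x : ℝ, F B x = ∑ i, max (1 - x / (B - c i)) 0) :
    ∃ B₀ : ℝ, ∀ B : ℝ, B₀ < B →
      (∑ i, (1 - (B - cmax) / (B - c i))) < 1 ∧
      (∀ x : ℝ, 0 ≤ x → F B x = 1 → x < B - cmax) := by
  obtain ⟨j, hj⟩ := hcmax.1
  have hcmax_pos : 0 < cmax := hj ▸ hc j
  have hle : ∀ i, c i ≤ cmax := fun i => hcmax.2 ⟨i, rfl⟩
  have hn' : (2 : ℝ) ≤ n := by exact_mod_cast hn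
  have hnpos : (0 : ℝ) < n := by linarith
  refine ⟨cmax + n * cmax, fun B hB => ?_⟩
  have hBcm : 0 < B - cmax := by nlinarith
  have hBc : ∀ i, 0 < B - c i := fun i => by have := hle i; linarith
  have hsum : (∑ i, (1 - (B - cmax) / (B - c i))) < 1 := by
    have h1 : ∀ i : Fin n, 1 - (B - cmax) / (B - c i) < 1 / n := by
      intro i
      have hd := hBc i
      have heq : 1 - (B - cmax) / (B - c i) = (cmax - c i) / (B - c i) := by
        field_simp
        ring
      rw [heq, div_lt_div_iff₀ hd hnpos]
      nlinarith [hc i, hle i]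
    calc (∑ i, (1 - (B - cmax) / (B - c i))) < ∑ _i : Fin n, (1 / n : ℝ) := by
          apply Finset.sum_lt_sum_of_nonempty
          · exact Finset.univ_nonempty_iff.2 (Fin.pos_iff_nonempty.1 (by omega))
          · exact fun i _ => h1 i
      _ = 1 := by
          rw [Finset.sum_const, Finset.card_univ, Fintype.card_fin, nsmul_eq_mul]
          field_simp
  refine ⟨hsum, fun x hx hFx => ?_⟩
  by_contra h
  push_neg at h
  rw [hF] at hFx
  have hle2 : (∑ i, max (1 - x / (B - c i)) 0) ≤ ∑ i, (1 - (B - cmax) / (B - c i)) := by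
    apply Finset.sum_le_sum
    intro i _
    have hd := hBc i
    have h0 : 0 ≤ 1 - (B - cmax) / (B - c i) := by
      rw [sub_nonneg, div_le_one hd]; linarith [hle i]
    refine max_le ?_ h0
    exact sub_le_sub_left ((div_le_div_iff_of_pos_right hd).2 h) 1
  linarith
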